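/- arXiv:2210.01596 — 2 statements merged into one kernel-verified Lean document; each statement's English description precedes it below -/
import Mathlib

section
/- (Gluing inequality for the quadratic GW functional.) Let S, X, Y be compact metric spaces with probability measures σ, μ, ν, and let π ∈ P(S × X × Y) have marginals σ, μ, ν. Then the L²(π⊗π) triangle inequality holds: (∬ |d_X(x,x') − d_Y(y,y')|² dπ dπ)^{1/2} ≤ (∬ |d_X(x,x') − d_S(s,s')|² dπ dπ)^{1/2} + (∬ |d_S(s,s') − d_Y(y,y')|² dπ dπ)^{1/2}. In particular, GW(X,Y) ≤ GW(S,X) + GW(S,Y) (triangle inequality for the GW distance), using a glued plan built from optimal two-plans. -/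
open MeasureTheory Filter Topology

/-- The Gromov–Wasserstein cost of a plan `π` on `X × Y`. -/
noncomputable def gwCost {X Y : Type*} [PseudoMetricSpace X] [PseudoMetricSpace Y]
    [MeasurableSpace X] [MeasurableSpace Y] (π : Measure (X × Y)) : ℝ :=
  ∫ p, ∫ q, (dist p.1 q.1 - dist p.2 q.2) ^ 2 ∂π ∂π

/-- `π` is a coupling of `μ` and `ν`. -/
def IsCoupling {X Y : Type*} [MeasurableSpace X] [MeasurableSpace Y]
    (π : Measure (X × Y)) (μ : Measure X) (ν : Measure Y) : Prop :=
  π.map Prod.fst = μ ∧ π.map Prod.snd = ν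

/-- The squared Gromov–Wasserstein distance. -/
noncomputable def gwSq {X Y : Type*} [PseudoMetricSpace X] [PseudoMetricSpace Y]
    [MeasurableSpace X] [MeasurableSpace Y] (μ : Measure X) (ν : Measure Y) : ℝ :=
  sInf {c | ∃ π : Measure (X × Y), IsCoupling π μ ν ∧ c = gwCost π}

/-- `π` is an optimal Gromov–Wasserstein plan between `μ` and `ν`. -/
def IsOptGW {X Y : Type*} [PseudoMetricSpace X] [PseudoMetricSpace Y]
    [MeasurableSpace X] [MeasurableSpace Y]
    (π : Measure (X × Y)) (μ : Measure X) (ν : Measure Y) : Prop :=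
  IsCoupling π μ ν ∧ gwCost π = gwSq μ ν

/-- The LGW objective of a three-plan on `S × X × Y`:
`∬ |d_X(x,x') − d_Y(y,y')|² dπ dπ`. -/
noncomputable def lgwCost {S X Y : Type*} [PseudoMetricSpace X] [PseudoMetricSpace Y]
    [MeasurableSpace S] [MeasurableSpace X] [MeasurableSpace Y]
    (π : Measure (S × X × Y)) : ℝ :=
  ∫ p, ∫ q, (dist p.2.1 q.2.1 - dist p.2.2 q.2.2) ^ 2 ∂π ∂π

/-- The linear Gromov–Wasserstein value with reference `(S, σ)`:
infimum of the LGW objective over three-plans whose `(S,X)`- and `(S,Y)`-marginals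
are optimal GW plans. -/
noncomputable def lgw {S X Y : Type*} [PseudoMetricSpace S] [PseudoMetricSpace X]
    [PseudoMetricSpace Y] [MeasurableSpace S] [MeasurableSpace X] [MeasurableSpace Y]
    (σ : Measure S) (μ : Measure X) (ν : Measure Y) : ℝ :=
  sInf {c | ∃ π : Measure (S × X × Y),
    IsOptGW (π.map (fun p => (p.1, p.2.1))) σ μ ∧
    IsOptGW (π.map (fun p => (p.1, p.2.2))) σ ν ∧
    c = lgwCost π}

/-- The cost `c_ε` on `(S × X × Y)²`. -/
noncomputable def cEps {S X Y : Type*} [PseudoMetricSpace S] [PseudoMetricSpace X]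
    [PseudoMetricSpace Y] (ε : ℝ) (p q : S × X × Y) : ℝ :=
  ε * (dist p.2.1 q.2.1 - dist p.2.2 q.2.2) ^ 2
    + (dist p.1 q.1 - dist p.2.1 q.2.1) ^ 2
    + (dist p.1 q.1 - dist p.2.2 q.2.2) ^ 2

/-- The quadratic functional `π ↦ ∬ c_ε dπ dπ` of the ε-multi-marginal GW problem. -/
noncomputable def mgwEps {S X Y : Type*} [PseudoMetricSpace S] [PseudoMetricSpace X]
    [PseudoMetricSpace Y] [MeasurableSpace S] [MeasurableSpace X] [MeasurableSpace Y]
    (ε : ℝ) (π : Measure (S × X × Y)) : ℝ :=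
  ∫ p, ∫ q, cEps ε p q ∂π ∂π

/-- `π ∈ Π(σ, μ, ν)`: three-marginal coupling. -/
def IsTripleCoupling {S X Y : Type*} [MeasurableSpace S] [MeasurableSpace X]
    [MeasurableSpace Y] (π : Measure (S × X × Y))
    (σ : Measure S) (μ : Measure X) (ν : Measure Y) : Prop :=
  π.map Prod.fst = σ ∧ π.map (fun p => p.2.1) = μ ∧ π.map (fun p => p.2.2) = ν


section AuxGW

open ProbabilityTheory
open scoped ENNReal

private lemma memLp_of_continuous_aux {α : Type*} [TopologicalSpace α] [CompactSpace α]
    [MeasurableSpace α] [OpensMeasurableSpace α] (μ : Measure α) [IsFiniteMeasure μ]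
    {f : α → ℝ} (hf : Continuous f) (p : ℝ≥0∞) : MemLp f p μ := by
  obtain ⟨C, hC⟩ := isCompact_univ.exists_bound_of_continuousOn hf.continuousOn
  exact (memLp_top_of_bound hf.aestronglyMeasurable C
    (ae_of_all _ fun x => hC x trivial)).mono_exponent le_top

private lemma sqrt_L2_triangle_aux {α : Type*} [MeasurableSpace α] (μ : Measure α)
    (f g : α → ℝ) (hf : MemLp f 2 μ) (hg : MemLp g 2 μ) :
    Real.sqrt (∫ x, (f x + g x) ^ 2 ∂μ)
      ≤ Real.sqrt (∫ x, f x ^ 2 ∂μ) + Real.sqrt (∫ x, g x ^ 2 ∂μ) := by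
  haveI : Fact ((1 : ℝ≥0∞) ≤ 2) := ⟨one_le_two⟩
  have key : ∀ (h : α → ℝ) (hh : MemLp h 2 μ),
      Real.sqrt (∫ x, h x ^ 2 ∂μ) = ‖hh.toLp h‖ := by
    intro h hh
    have h1 : (inner ℝ (hh.toLp h) (hh.toLp h) : ℝ) = ∫ x, h x ^ 2 ∂μ := by
      rw [L2.inner_def]
      refine integral_congr_ae ?_
      filter_upwards [hh.coeFn_toLp] with x hx
      rw [hx]
      simp only [RCLike.inner_apply, starRingEnd_apply, star_trivial]
      ring
    rw [← h1, real_inner_self_eq_norm_sq, Real.sqrt_sq (norm_nonneg _)]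
  have hfg : MemLp (f + g) 2 μ := hf.add hg
  calc Real.sqrt (∫ x, (f x + g x) ^ 2 ∂μ) = ‖hfg.toLp (f + g)‖ := key (f + g) hfg
    _ = ‖hf.toLp f + hg.toLp g‖ := by rw [MemLp.toLp_add]
    _ ≤ ‖hf.toLp f‖ + ‖hg.toLp g‖ := norm_add_le _ _
    _ = Real.sqrt (∫ x, f x ^ 2 ∂μ) + Real.sqrt (∫ x, g x ^ 2 ∂μ) := by
        rw [key f hf, key g hg]

private lemma sqrt_L2_sub_triangle_aux {α : Type*} [MeasurableSpace α] (μ : Measure α)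
    (a b c : α → ℝ) (hab : MemLp (fun x => a x - b x) 2 μ)
    (hbc : MemLp (fun x => b x - c x) 2 μ) :
    Real.sqrt (∫ x, (a x - c x) ^ 2 ∂μ)
      ≤ Real.sqrt (∫ x, (a x - b x) ^ 2 ∂μ) + Real.sqrt (∫ x, (b x - c x) ^ 2 ∂μ) := by
  have h1 : ∫ x, (a x - c x) ^ 2 ∂μ
      = ∫ x, ((fun x => a x - b x) x + (fun x => b x - c x) x) ^ 2 ∂μ :=
    integral_congr_ae (ae_of_all _ fun x => by simp only []; ring)
  rw [h1]
  exact sqrt_L2_triangle_aux μ _ _ hab hbc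

private lemma minkowski3_aux {S X Y : Type*}
    [MetricSpace S] [CompactSpace S] [MeasurableSpace S] [BorelSpace S]
    [MetricSpace X] [CompactSpace X] [MeasurableSpace X] [BorelSpace X]
    [MetricSpace Y] [CompactSpace Y] [MeasurableSpace Y] [BorelSpace Y]
    (π : Measure (S × X × Y)) [IsProbabilityMeasure π] :
    Real.sqrt (∫ p, ∫ q, (dist p.2.1 q.2.1 - dist p.2.2 q.2.2) ^ 2 ∂π ∂π)
      ≤ Real.sqrt (∫ p, ∫ q, (dist p.2.1 q.2.1 - dist p.1 q.1) ^ 2 ∂π ∂π)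
        + Real.sqrt (∫ p, ∫ q, (dist p.1 q.1 - dist p.2.2 q.2.2) ^ 2 ∂π ∂π) := by
  have hint : ∀ F : (S × X × Y) × (S × X × Y) → ℝ, Continuous F →
      Integrable (Function.uncurry (fun p q => F (p, q))) (π.prod π) := by
    intro F hF
    exact memLp_one_iff_integrable.mp (memLp_of_continuous_aux (π.prod π) hF 1)
  have e1 : ∫ p, ∫ q, (dist p.2.1 q.2.1 - dist p.2.2 q.2.2) ^ 2 ∂π ∂π
      = ∫ z : (S × X × Y) × (S × X × Y),
          (dist z.1.2.1 z.2.2.1 - dist z.1.2.2 z.2.2.2) ^ 2 ∂(π.prod π) :=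
    integral_integral (hint (fun z => (dist z.1.2.1 z.2.2.1 - dist z.1.2.2 z.2.2.2) ^ 2) (by fun_prop))
  have e2 : ∫ p, ∫ q, (dist p.2.1 q.2.1 - dist p.1 q.1) ^ 2 ∂π ∂π
      = ∫ z : (S × X × Y) × (S × X × Y),
          (dist z.1.2.1 z.2.2.1 - dist z.1.1 z.2.1) ^ 2 ∂(π.prod π) :=
    integral_integral (hint (fun z => (dist z.1.2.1 z.2.2.1 - dist z.1.1 z.2.1) ^ 2) (by fun_prop))
  have e3 : ∫ p, ∫ q, (dist p.1 q.1 - dist p.2.2 q.2.2) ^ 2 ∂π ∂π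
      = ∫ z : (S × X × Y) × (S × X × Y),
          (dist z.1.1 z.2.1 - dist z.1.2.2 z.2.2.2) ^ 2 ∂(π.prod π) :=
    integral_integral (hint (fun z => (dist z.1.1 z.2.1 - dist z.1.2.2 z.2.2.2) ^ 2) (by fun_prop))
  rw [e1, e2, e3]
  exact sqrt_L2_sub_triangle_aux (π.prod π)
    (fun z => dist z.1.2.1 z.2.2.1) (fun z => dist z.1.1 z.2.1)
    (fun z => dist z.1.2.2 z.2.2.2)
    (memLp_of_continuous_aux _ (by fun_prop) 2)
    (memLp_of_continuous_aux _ (by fun_prop) 2)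

private lemma map_compProd_prod_fst_aux {S X Y : Type*} [MeasurableSpace S] [MeasurableSpace X]
    [MeasurableSpace Y] (σ : Measure S) [SFinite σ] (κ : ProbabilityTheory.Kernel S X)
    (η : ProbabilityTheory.Kernel S Y) [ProbabilityTheory.IsMarkovKernel κ]
    [ProbabilityTheory.IsMarkovKernel η] :
    (σ ⊗ₘ (κ ×ₖ η)).map (fun p => (p.1, p.2.1)) = σ ⊗ₘ κ := by
  have hm : Measurable (fun p : S × X × Y => (p.1, p.2.1)) :=
    measurable_fst.prodMk (measurable_fst.comp measurable_snd)
  ext s hs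
  rw [Measure.map_apply hm hs, Measure.compProd_apply (hm hs), Measure.compProd_apply hs]
  congr 1
  funext a
  have h1 : (Prod.mk a ⁻¹' ((fun p : S × X × Y => (p.1, p.2.1)) ⁻¹' s))
      = {p : X × Y | p.1 ∈ Prod.mk a ⁻¹' s} := rfl
  rw [h1, ← Kernel.fst_apply' _ _ (measurable_prodMk_left hs), Kernel.fst_prod]

private lemma map_compProd_prod_snd_aux {S X Y : Type*} [MeasurableSpace S] [MeasurableSpace X]
    [MeasurableSpace Y] (σ : Measure S) [SFinite σ] (κ : ProbabilityTheory.Kernel S X)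
    (η : ProbabilityTheory.Kernel S Y) [ProbabilityTheory.IsMarkovKernel κ]
    [ProbabilityTheory.IsMarkovKernel η] :
    (σ ⊗ₘ (κ ×ₖ η)).map (fun p => (p.1, p.2.2)) = σ ⊗ₘ η := by
  have hm : Measurable (fun p : S × X × Y => (p.1, p.2.2)) :=
    measurable_fst.prodMk (measurable_snd.comp measurable_snd)
  ext s hs
  rw [Measure.map_apply hm hs, Measure.compProd_apply (hm hs), Measure.compProd_apply hs]
  congr 1
  funext a
  have h1 : (Prod.mk a ⁻¹' ((fun p : S × X × Y => (p.1, p.2.2)) ⁻¹' s))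
      = Prod.snd ⁻¹' (Prod.mk a ⁻¹' s) := rfl
  rw [h1, ← Kernel.snd_apply' _ _ (measurable_prodMk_left hs), Kernel.snd_prod]

private lemma double_integral_map_aux {α β : Type*} [MeasurableSpace α] [TopologicalSpace β]
    [MeasurableSpace β] [OpensMeasurableSpace β] [SecondCountableTopology β]
    (μ : Measure α) [IsProbabilityMeasure μ] {φ : α → β} (hφ : Measurable φ)
    {F : β → β → ℝ} (hF : Continuous (Function.uncurry F)) :
    ∫ p, ∫ q, F p q ∂(μ.map φ) ∂(μ.map φ) = ∫ p, ∫ q, F (φ p) (φ q) ∂μ ∂μ := by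
  haveI : IsProbabilityMeasure (μ.map φ) := Measure.isProbabilityMeasure_map hφ.aemeasurable
  have hsm : AEStronglyMeasurable (fun b => ∫ q, F b q ∂(μ.map φ)) (μ.map φ) :=
    (hF.stronglyMeasurable.integral_prod_right').aestronglyMeasurable
  calc (∫ p, ∫ q, F p q ∂(μ.map φ) ∂(μ.map φ))
      = ∫ p, ∫ q, F (φ p) q ∂(μ.map φ) ∂μ := integral_map hφ.aemeasurable hsm
    _ = ∫ p, ∫ q, F (φ p) (φ q) ∂μ ∂μ :=
        integral_congr_ae (ae_of_all _ fun p =>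
          integral_map hφ.aemeasurable
            ((hF.comp (Continuous.prodMk_right (φ p))).aestronglyMeasurable))

private lemma gwCost_nonneg_aux {X Y : Type*} [PseudoMetricSpace X] [PseudoMetricSpace Y]
    [MeasurableSpace X] [MeasurableSpace Y] (π : Measure (X × Y)) : 0 ≤ gwCost π :=
  integral_nonneg fun _ => integral_nonneg fun _ => sq_nonneg _

private lemma gwSet_bddBelow_aux {X Y : Type*} [PseudoMetricSpace X] [PseudoMetricSpace Y]
    [MeasurableSpace X] [MeasurableSpace Y] (μ : Measure X) (ν : Measure Y) :
    BddBelow {c | ∃ π : Measure (X × Y), IsCoupling π μ ν ∧ c = gwCost π} :=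
  ⟨0, fun _ hc => by obtain ⟨π', _, rfl⟩ := hc; exact gwCost_nonneg_aux π'⟩

private lemma gwSet_nonempty_aux {X Y : Type*} [PseudoMetricSpace X] [PseudoMetricSpace Y]
    [MeasurableSpace X] [MeasurableSpace Y] (μ : Measure X) (ν : Measure Y)
    [IsProbabilityMeasure μ] [IsProbabilityMeasure ν] :
    Set.Nonempty {c | ∃ π : Measure (X × Y), IsCoupling π μ ν ∧ c = gwCost π} :=
  ⟨gwCost (μ.prod ν), μ.prod ν, ⟨Measure.fst_prod, Measure.snd_prod⟩, rfl⟩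

private lemma gwSq_nonneg_aux {X Y : Type*} [PseudoMetricSpace X] [PseudoMetricSpace Y]
    [MeasurableSpace X] [MeasurableSpace Y] (μ : Measure X) (ν : Measure Y)
    [IsProbabilityMeasure μ] [IsProbabilityMeasure ν] : 0 ≤ gwSq μ ν :=
  le_csInf (gwSet_nonempty_aux μ ν)
    (fun _ hc => by obtain ⟨π', _, rfl⟩ := hc; exact gwCost_nonneg_aux π')

private lemma sqrt_add_le_aux {a b : ℝ} (ha : 0 ≤ a) (hb : 0 ≤ b) :
    Real.sqrt (a + b) ≤ Real.sqrt a + Real.sqrt b := by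
  have h : a + b ≤ (Real.sqrt a + Real.sqrt b) ^ 2 := by
    have h1 := Real.sq_sqrt ha
    have h2 := Real.sq_sqrt hb
    nlinarith [Real.sqrt_nonneg a, Real.sqrt_nonneg b]
  calc Real.sqrt (a + b) ≤ Real.sqrt ((Real.sqrt a + Real.sqrt b) ^ 2) := Real.sqrt_le_sqrt h
    _ = Real.sqrt a + Real.sqrt b := Real.sqrt_sq (by positivity)

private lemma isProb_of_map_fst_aux {A B : Type*} [MeasurableSpace A] [MeasurableSpace B]
    {π : Measure (A × B)} {σ : Measure A} [IsProbabilityMeasure σ]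
    (h : π.map Prod.fst = σ) : IsProbabilityMeasure π := by
  constructor
  have h2 := congrArg (fun m : Measure A => m Set.univ) h
  simpa [Measure.map_apply measurable_fst MeasurableSet.univ] using h2

end AuxGW

open ProbabilityTheory

/-- gluing/Minkowski inequality for the quadratic GW functional, and the
triangle inequality for the GW distance. -/
theorem gw_triangle
    {S X Y : Type*}
    [MetricSpace S] [CompactSpace S] [MeasurableSpace S] [BorelSpace S]
    [MetricSpace X] [CompactSpace X] [MeasurableSpace X] [BorelSpace X]
    [MetricSpace Y] [CompactSpace Y] [MeasurableSpace Y] [BorelSpace Y]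
    (σ : Measure S) (μ : Measure X) (ν : Measure Y)
    [IsProbabilityMeasure σ] [IsProbabilityMeasure μ] [IsProbabilityMeasure ν]
    (π : Measure (S × X × Y)) (hπ : IsTripleCoupling π σ μ ν) :
    Real.sqrt (∫ p, ∫ q, (dist p.2.1 q.2.1 - dist p.2.2 q.2.2) ^ 2 ∂π ∂π)
      ≤ Real.sqrt (∫ p, ∫ q, (dist p.2.1 q.2.1 - dist p.1 q.1) ^ 2 ∂π ∂π)
        + Real.sqrt (∫ p, ∫ q, (dist p.1 q.1 - dist p.2.2 q.2.2) ^ 2 ∂π ∂π) ∧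
    Real.sqrt (gwSq μ ν) ≤ Real.sqrt (gwSq σ μ) + Real.sqrt (gwSq σ ν) := by
  classical
  haveI hπprob : IsProbabilityMeasure π := isProb_of_map_fst_aux hπ.1
  refine ⟨minkowski3_aux π, ?_⟩
  haveI hXne : Nonempty X := μ.nonempty_of_neZero
  haveI hYne : Nonempty Y := ν.nonempty_of_neZero
  refine le_of_forall_pos_le_add fun δ hδ => ?_
  have hε : (0 : ℝ) < (δ / 2) ^ 2 := by positivity
  obtain ⟨c1, hc1mem, hlt1⟩ := Real.lt_sInf_add_pos (gwSet_nonempty_aux σ μ) hε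
  obtain ⟨π₁, hc₁, rfl⟩ := hc1mem
  obtain ⟨c2, hc2mem, hlt2⟩ := Real.lt_sInf_add_pos (gwSet_nonempty_aux σ ν) hε
  obtain ⟨π₂, hc₂, rfl⟩ := hc2mem
  haveI : IsProbabilityMeasure π₁ := isProb_of_map_fst_aux hc₁.1
  haveI : IsProbabilityMeasure π₂ := isProb_of_map_fst_aux hc₂.1
  have hfst₁ : π₁.fst = σ := hc₁.1
  have hfst₂ : π₂.fst = σ := hc₂.1
  set κ := π₁.condKernel with hκ
  set η := π₂.condKernel with hη
  set πg : Measure (S × X × Y) := σ ⊗ₘ (κ ×ₖ η) with hπg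
  haveI : IsProbabilityMeasure πg := by rw [hπg]; infer_instance
  have hm1 : πg.map (fun p => (p.1, p.2.1)) = π₁ := by
    rw [hπg, map_compProd_prod_fst_aux, ← hfst₁, hκ]
    exact π₁.disintegrate π₁.condKernel
  have hm2 : πg.map (fun p => (p.1, p.2.2)) = π₂ := by
    rw [hπg, map_compProd_prod_snd_aux, ← hfst₂, hη]
    exact π₂.disintegrate π₂.condKernel
  have hmeas1 : Measurable (fun p : S × X × Y => (p.1, p.2.1)) :=
    measurable_fst.prodMk (measurable_fst.comp measurable_snd)
  have hmeas2 : Measurable (fun p : S × X × Y => (p.1, p.2.2)) :=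
    measurable_fst.prodMk (measurable_snd.comp measurable_snd)
  have hmeasXY : Measurable (fun p : S × X × Y => (p.2.1, p.2.2)) :=
    (measurable_fst.comp measurable_snd).prodMk (measurable_snd.comp measurable_snd)
  set π' : Measure (X × Y) := πg.map (fun p => (p.2.1, p.2.2)) with hπ'
  have hcoup : IsCoupling π' μ ν := by
    constructor
    · rw [hπ', Measure.map_map measurable_fst hmeasXY]
      have h1 : μ = (πg.map (fun p : S × X × Y => (p.1, p.2.1))).map Prod.snd := by
        rw [hm1, hc₁.2]
      rw [h1, Measure.map_map measurable_snd hmeas1]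
      rfl
    · rw [hπ', Measure.map_map measurable_snd hmeasXY]
      have h1 : ν = (πg.map (fun p : S × X × Y => (p.1, p.2.2))).map Prod.snd := by
        rw [hm2, hc₂.2]
      rw [h1, Measure.map_map measurable_snd hmeas2]
      rfl
  have hmem : gwSq μ ν ≤ gwCost π' := csInf_le (gwSet_bddBelow_aux μ ν) ⟨π', hcoup, rfl⟩
  have hgw' : gwCost π'
      = ∫ p, ∫ q, (dist p.2.1 q.2.1 - dist p.2.2 q.2.2) ^ 2 ∂πg ∂πg := by
    rw [hπ']
    exact double_integral_map_aux πg hmeasXY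
      (F := fun a b : X × Y => (dist a.1 b.1 - dist a.2 b.2) ^ 2) (by fun_prop)
  have hgw1 : gwCost π₁
      = ∫ p, ∫ q, (dist p.1 q.1 - dist p.2.1 q.2.1) ^ 2 ∂πg ∂πg := by
    rw [← hm1]
    exact double_integral_map_aux πg hmeas1
      (F := fun a b : S × X => (dist a.1 b.1 - dist a.2 b.2) ^ 2) (by fun_prop)
  have hgw2 : gwCost π₂
      = ∫ p, ∫ q, (dist p.1 q.1 - dist p.2.2 q.2.2) ^ 2 ∂πg ∂πg := by
    rw [← hm2]
    exact double_integral_map_aux πg hmeas2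
      (F := fun a b : S × Y => (dist a.1 b.1 - dist a.2 b.2) ^ 2) (by fun_prop)
  have hflip : ∫ p, ∫ q, (dist p.2.1 q.2.1 - dist p.1 q.1) ^ 2 ∂πg ∂πg
      = ∫ p, ∫ q, (dist p.1 q.1 - dist p.2.1 q.2.1) ^ 2 ∂πg ∂πg :=
    integral_congr_ae (ae_of_all _ fun p =>
      integral_congr_ae (ae_of_all _ fun q => by ring))
  have hlt1' : gwCost π₁ ≤ gwSq σ μ + (δ / 2) ^ 2 := hlt1.le
  have hlt2' : gwCost π₂ ≤ gwSq σ ν + (δ / 2) ^ 2 := hlt2.le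
  calc Real.sqrt (gwSq μ ν) ≤ Real.sqrt (gwCost π') := Real.sqrt_le_sqrt hmem
    _ = Real.sqrt (∫ p, ∫ q, (dist p.2.1 q.2.1 - dist p.2.2 q.2.2) ^ 2 ∂πg ∂πg) := by
        rw [hgw']
    _ ≤ Real.sqrt (∫ p, ∫ q, (dist p.2.1 q.2.1 - dist p.1 q.1) ^ 2 ∂πg ∂πg)
        + Real.sqrt (∫ p, ∫ q, (dist p.1 q.1 - dist p.2.2 q.2.2) ^ 2 ∂πg ∂πg) :=
        minkowski3_aux πg
    _ = Real.sqrt (gwCost π₁) + Real.sqrt (gwCost π₂) := by rw [hflip, ← hgw1, ← hgw2]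
    _ ≤ Real.sqrt (gwSq σ μ + (δ / 2) ^ 2) + Real.sqrt (gwSq σ ν + (δ / 2) ^ 2) :=
        add_le_add (Real.sqrt_le_sqrt hlt1') (Real.sqrt_le_sqrt hlt2')
    _ ≤ (Real.sqrt (gwSq σ μ) + Real.sqrt ((δ / 2) ^ 2))
        + (Real.sqrt (gwSq σ ν) + Real.sqrt ((δ / 2) ^ 2)) :=
        add_le_add (sqrt_add_le_aux (gwSq_nonneg_aux σ μ) hε.le)
          (sqrt_add_le_aux (gwSq_nonneg_aux σ ν) hε.le)
    _ = Real.sqrt (gwSq σ μ) + Real.sqrt (gwSq σ ν) + δ := by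
        rw [Real.sqrt_sq (by positivity : (0:ℝ) ≤ δ / 2)]; ring
end

section
/- (Monotonicity in ε and convergence of optimal values.) Let V(ε) denote the optimal value of the ε-multi-marginal problem inf_{π ∈ Π(σ,μ,ν)} ∬ c_ε dπ dπ with c_ε = ε(d_X−d_Y)² + (d_S−d_X)² + (d_S−d_Y)². Then ε ↦ V(ε) is nondecreasing, and V(ε) → GW(S,X)² + GW(S,Y)² as ε → 0⁺. -/
open MeasureTheory Filter Topology

/-- The optimal value `V(ε)` of the ε-multi-marginal problem. -/
noncomputable def mgwVal {S X Y : Type*} [PseudoMetricSpace S] [PseudoMetricSpace X]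
    [PseudoMetricSpace Y] [MeasurableSpace S] [MeasurableSpace X] [MeasurableSpace Y]
    (σ : Measure S) (μ : Measure X) (ν : Measure Y) (ε : ℝ) : ℝ :=
  sInf {c | ∃ π : Measure (S × X × Y), IsTripleCoupling π σ μ ν ∧ c = mgwEps ε π}


section AuxLGW

open ProbabilityTheory

private lemma contIntegrable' {Z : Type*} [MetricSpace Z] [CompactSpace Z] [MeasurableSpace Z]
    [BorelSpace Z] (π : Measure Z) [IsFiniteMeasure π] {f : Z → ℝ}
    (hf : Continuous f) : Integrable f π :=
  hf.integrable_of_hasCompactSupport (HasCompactSupport.of_compactSpace f)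

private lemma double_eq' {Z : Type*} [MetricSpace Z] [CompactSpace Z] [MeasurableSpace Z]
    [BorelSpace Z] (π : Measure Z) [IsFiniteMeasure π] {f : Z → Z → ℝ}
    (hf : Continuous (Function.uncurry f)) :
    ∫ p, ∫ q, f p q ∂π ∂π = ∫ w, f w.1 w.2 ∂(π.prod π) :=
  integral_integral (contIntegrable' _ hf)

private lemma map_double' {Z W : Type*} [MetricSpace Z] [CompactSpace Z] [MeasurableSpace Z]
    [BorelSpace Z] [MetricSpace W] [CompactSpace W] [MeasurableSpace W] [BorelSpace W]
    (π : Measure Z) [IsProbabilityMeasure π] {T : Z → W} (hT : Continuous T)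
    {g : W × W → ℝ} (hg : Continuous g) :
    ∫ w, g w ∂((π.map T).prod (π.map T)) = ∫ w, g (T w.1, T w.2) ∂(π.prod π) := by
  rw [Measure.map_prod_map _ _ hT.measurable hT.measurable,
    integral_map (hT.measurable.prodMap hT.measurable).aemeasurable hg.aestronglyMeasurable]
  rfl

private lemma gwCost_nonneg' {W₁ W₂ : Type*} [PseudoMetricSpace W₁] [PseudoMetricSpace W₂]
    [MeasurableSpace W₁] [MeasurableSpace W₂] (π : Measure (W₁ × W₂)) : 0 ≤ gwCost π :=
  integral_nonneg fun _ => integral_nonneg fun _ => sq_nonneg _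

private lemma gwSq_le_gwCost' {W₁ W₂ : Type*} [PseudoMetricSpace W₁] [PseudoMetricSpace W₂]
    [MeasurableSpace W₁] [MeasurableSpace W₂] {μ₁ : Measure W₁} {μ₂ : Measure W₂}
    {π : Measure (W₁ × W₂)} (h : IsCoupling π μ₁ μ₂) : gwSq μ₁ μ₂ ≤ gwCost π :=
  csInf_le ⟨0, by rintro c ⟨π', -, rfl⟩; exact gwCost_nonneg' π'⟩ ⟨π, h, rfl⟩

private lemma coupling_set_nonempty' {W₁ W₂ : Type*} [PseudoMetricSpace W₁] [PseudoMetricSpace W₂]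
    [MeasurableSpace W₁] [MeasurableSpace W₂] (μ₁ : Measure W₁) (μ₂ : Measure W₂)
    [IsProbabilityMeasure μ₁] [IsProbabilityMeasure μ₂] :
    {c | ∃ π : Measure (W₁ × W₂), IsCoupling π μ₁ μ₂ ∧ c = gwCost π}.Nonempty :=
  ⟨gwCost (μ₁.prod μ₂), μ₁.prod μ₂, ⟨Measure.fst_prod, Measure.snd_prod⟩, rfl⟩

private lemma prob_of_map_fst' {W₁ W₂ : Type*} [MeasurableSpace W₁] [MeasurableSpace W₂]
    {π : Measure (W₁ × W₂)} {μ₁ : Measure W₁} [IsProbabilityMeasure μ₁]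
    (h : π.map Prod.fst = μ₁) : IsProbabilityMeasure π := by
  constructor
  have h2 : π.map Prod.fst Set.univ = 1 := by rw [h]; exact measure_univ
  rwa [Measure.map_apply measurable_fst MeasurableSet.univ, Set.preimage_univ] at h2

private lemma nonempty_of_prob' {W : Type*} [MeasurableSpace W] (μ : Measure W)
    [IsProbabilityMeasure μ] : Nonempty W := by
  by_contra h
  rw [not_nonempty_iff] at h
  have h1 : μ Set.univ = 1 := measure_univ
  rw [Set.univ_eq_empty_iff.mpr h, measure_empty] at h1
  exact zero_ne_one h1

variable {S X Y : Type*}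
    [MetricSpace S] [CompactSpace S] [MeasurableSpace S] [BorelSpace S]
    [MetricSpace X] [CompactSpace X] [MeasurableSpace X] [BorelSpace X]
    [MetricSpace Y] [CompactSpace Y] [MeasurableSpace Y] [BorelSpace Y]

private lemma tripleProb' {π : Measure (S × X × Y)} {σ : Measure S} {μ : Measure X}
    {ν : Measure Y} [IsProbabilityMeasure σ] (h : IsTripleCoupling π σ μ ν) :
    IsProbabilityMeasure π := prob_of_map_fst' h.1

private lemma coupling₁' {π : Measure (S × X × Y)} {σ : Measure S} {μ : Measure X}
    {ν : Measure Y} (h : IsTripleCoupling π σ μ ν) :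
    IsCoupling (π.map (fun p => (p.1, p.2.1))) σ μ := by
  have hm : Measurable fun p : S × X × Y => (p.1, p.2.1) := by fun_prop
  refine ⟨?_, ?_⟩
  · rw [Measure.map_map measurable_fst hm]; exact h.1
  · rw [Measure.map_map measurable_snd hm]; exact h.2.1

private lemma coupling₂' {π : Measure (S × X × Y)} {σ : Measure S} {μ : Measure X}
    {ν : Measure Y} (h : IsTripleCoupling π σ μ ν) :
    IsCoupling (π.map (fun p => (p.1, p.2.2))) σ ν := by
  have hm : Measurable fun p : S × X × Y => (p.1, p.2.2) := by fun_prop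
  refine ⟨?_, ?_⟩
  · rw [Measure.map_map measurable_fst hm]; exact h.1
  · rw [Measure.map_map measurable_snd hm]; exact h.2.2

private lemma gwCost_map₁' (π : Measure (S × X × Y)) [IsProbabilityMeasure π] :
    ∫ w : (S × X × Y) × (S × X × Y),
        (dist w.1.1 w.2.1 - dist w.1.2.1 w.2.2.1) ^ 2 ∂(π.prod π)
      = gwCost (π.map (fun p => (p.1, p.2.1))) := by
  have hT : Continuous fun p : S × X × Y => (p.1, p.2.1) := by fun_prop
  have hg : Continuous fun w : (S × X) × (S × X) =>
      (dist w.1.1 w.2.1 - dist w.1.2 w.2.2) ^ 2 := by fun_prop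
  haveI : IsProbabilityMeasure (π.map fun p : S × X × Y => (p.1, p.2.1)) :=
    Measure.isProbabilityMeasure_map hT.measurable.aemeasurable
  calc ∫ w : (S × X × Y) × (S × X × Y),
        (dist w.1.1 w.2.1 - dist w.1.2.1 w.2.2.1) ^ 2 ∂(π.prod π)
      = ∫ w, (fun w : (S × X) × (S × X) => (dist w.1.1 w.2.1 - dist w.1.2 w.2.2) ^ 2)
          ((w.1.1, w.1.2.1), (w.2.1, w.2.2.1)) ∂(π.prod π) := rfl
    _ = ∫ w, (fun w : (S × X) × (S × X) => (dist w.1.1 w.2.1 - dist w.1.2 w.2.2) ^ 2) w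
          ∂(((π.map fun p : S × X × Y => (p.1, p.2.1))).prod
            (π.map fun p : S × X × Y => (p.1, p.2.1))) := (map_double' π hT hg).symm
    _ = gwCost (π.map (fun p => (p.1, p.2.1))) :=
        (double_eq' (π.map fun p : S × X × Y => (p.1, p.2.1))
          (f := fun p q : S × X => (dist p.1 q.1 - dist p.2 q.2) ^ 2) hg).symm

private lemma gwCost_map₂' (π : Measure (S × X × Y)) [IsProbabilityMeasure π] :
    ∫ w : (S × X × Y) × (S × X × Y),
        (dist w.1.1 w.2.1 - dist w.1.2.2 w.2.2.2) ^ 2 ∂(π.prod π)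
      = gwCost (π.map (fun p => (p.1, p.2.2))) := by
  have hT : Continuous fun p : S × X × Y => (p.1, p.2.2) := by fun_prop
  have hg : Continuous fun w : (S × Y) × (S × Y) =>
      (dist w.1.1 w.2.1 - dist w.1.2 w.2.2) ^ 2 := by fun_prop
  haveI : IsProbabilityMeasure (π.map fun p : S × X × Y => (p.1, p.2.2)) :=
    Measure.isProbabilityMeasure_map hT.measurable.aemeasurable
  calc ∫ w : (S × X × Y) × (S × X × Y),
        (dist w.1.1 w.2.1 - dist w.1.2.2 w.2.2.2) ^ 2 ∂(π.prod π)
      = ∫ w, (fun w : (S × Y) × (S × Y) => (dist w.1.1 w.2.1 - dist w.1.2 w.2.2) ^ 2)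
          ((w.1.1, w.1.2.2), (w.2.1, w.2.2.2)) ∂(π.prod π) := rfl
    _ = ∫ w, (fun w : (S × Y) × (S × Y) => (dist w.1.1 w.2.1 - dist w.1.2 w.2.2) ^ 2) w
          ∂(((π.map fun p : S × X × Y => (p.1, p.2.2))).prod
            (π.map fun p : S × X × Y => (p.1, p.2.2))) := (map_double' π hT hg).symm
    _ = gwCost (π.map (fun p => (p.1, p.2.2))) :=
        (double_eq' (π.map fun p : S × X × Y => (p.1, p.2.2))
          (f := fun p q : S × Y => (dist p.1 q.1 - dist p.2 q.2) ^ 2) hg).symm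

private lemma mgwEps_eq' (ε : ℝ) (π : Measure (S × X × Y)) [IsProbabilityMeasure π] :
    mgwEps ε π
      = ε * ∫ w : (S × X × Y) × (S × X × Y),
            (dist w.1.2.1 w.2.2.1 - dist w.1.2.2 w.2.2.2) ^ 2 ∂(π.prod π)
        + gwCost (π.map (fun p => (p.1, p.2.1)))
        + gwCost (π.map (fun p => (p.1, p.2.2))) := by
  have hq1 : Continuous fun w : (S × X × Y) × (S × X × Y) =>
      (dist w.1.2.1 w.2.2.1 - dist w.1.2.2 w.2.2.2) ^ 2 := by fun_prop
  have hq2 : Continuous fun w : (S × X × Y) × (S × X × Y) =>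
      (dist w.1.1 w.2.1 - dist w.1.2.1 w.2.2.1) ^ 2 := by fun_prop
  have hq3 : Continuous fun w : (S × X × Y) × (S × X × Y) =>
      (dist w.1.1 w.2.1 - dist w.1.2.2 w.2.2.2) ^ 2 := by fun_prop
  have hc : Continuous (Function.uncurry fun p q : S × X × Y => cEps ε p q) :=
    ((continuous_const.mul hq1).add hq2).add hq3
  have I1 := contIntegrable' (π.prod π) hq1
  have I2 := contIntegrable' (π.prod π) hq2
  have I3 := contIntegrable' (π.prod π) hq3
  calc mgwEps ε π
      = ∫ w : (S × X × Y) × (S × X × Y), cEps ε w.1 w.2 ∂(π.prod π) := double_eq' π hc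
    _ = ∫ w : (S × X × Y) × (S × X × Y),
          ((ε * (dist w.1.2.1 w.2.2.1 - dist w.1.2.2 w.2.2.2) ^ 2
            + (dist w.1.1 w.2.1 - dist w.1.2.1 w.2.2.1) ^ 2)
            + (dist w.1.1 w.2.1 - dist w.1.2.2 w.2.2.2) ^ 2) ∂(π.prod π) := rfl
    _ = (∫ w : (S × X × Y) × (S × X × Y),
          (ε * (dist w.1.2.1 w.2.2.1 - dist w.1.2.2 w.2.2.2) ^ 2
            + (dist w.1.1 w.2.1 - dist w.1.2.1 w.2.2.1) ^ 2) ∂(π.prod π))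
        + ∫ w : (S × X × Y) × (S × X × Y),
            (dist w.1.1 w.2.1 - dist w.1.2.2 w.2.2.2) ^ 2 ∂(π.prod π) :=
        integral_add ((I1.const_mul ε).add I2) I3
    _ = ε * ∫ w : (S × X × Y) × (S × X × Y),
            (dist w.1.2.1 w.2.2.1 - dist w.1.2.2 w.2.2.2) ^ 2 ∂(π.prod π)
        + (∫ w : (S × X × Y) × (S × X × Y),
            (dist w.1.1 w.2.1 - dist w.1.2.1 w.2.2.1) ^ 2 ∂(π.prod π))
        + ∫ w : (S × X × Y) × (S × X × Y),
            (dist w.1.1 w.2.1 - dist w.1.2.2 w.2.2.2) ^ 2 ∂(π.prod π) := by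
        rw [integral_add (I1.const_mul ε) I2, integral_const_mul]
    _ = ε * ∫ w : (S × X × Y) × (S × X × Y),
            (dist w.1.2.1 w.2.2.1 - dist w.1.2.2 w.2.2.2) ^ 2 ∂(π.prod π)
        + gwCost (π.map (fun p => (p.1, p.2.1)))
        + gwCost (π.map (fun p => (p.1, p.2.2))) := by
        rw [gwCost_map₁' π, gwCost_map₂' π]

variable (σ : Measure S) (μ : Measure X) (ν : Measure Y)
    [IsProbabilityMeasure σ] [IsProbabilityMeasure μ] [IsProbabilityMeasure ν]

private lemma triple_set_nonempty' (ε : ℝ) :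
    {c | ∃ π : Measure (S × X × Y), IsTripleCoupling π σ μ ν ∧ c = mgwEps ε π}.Nonempty := by
  refine ⟨mgwEps ε (σ.prod (μ.prod ν)), σ.prod (μ.prod ν), ⟨Measure.fst_prod, ?_, ?_⟩, rfl⟩
  · rw [show (fun p : S × X × Y => p.2.1) = Prod.fst ∘ Prod.snd from rfl,
      ← Measure.map_map measurable_fst measurable_snd,
      show (σ.prod (μ.prod ν)).map Prod.snd = μ.prod ν from Measure.snd_prod]
    exact Measure.fst_prod
  · rw [show (fun p : S × X × Y => p.2.2) = Prod.snd ∘ Prod.snd from rfl,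
      ← Measure.map_map measurable_snd measurable_snd,
      show (σ.prod (μ.prod ν)).map Prod.snd = μ.prod ν from Measure.snd_prod]
    exact Measure.snd_prod

private lemma lower_bound' {ε : ℝ} (hε : 0 ≤ ε) {π : Measure (S × X × Y)}
    (h : IsTripleCoupling π σ μ ν) : gwSq σ μ + gwSq σ ν ≤ mgwEps ε π := by
  haveI := tripleProb' h
  rw [mgwEps_eq' ε π]
  have hA : 0 ≤ ∫ w : (S × X × Y) × (S × X × Y),
      (dist w.1.2.1 w.2.2.1 - dist w.1.2.2 w.2.2.2) ^ 2 ∂(π.prod π) :=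
    integral_nonneg fun _ => sq_nonneg _
  have h1 := gwSq_le_gwCost' (coupling₁' h)
  have h2 := gwSq_le_gwCost' (coupling₂' h)
  nlinarith [mul_nonneg hε hA]

private lemma bdd' {ε : ℝ} (hε : 0 ≤ ε) :
    BddBelow {c | ∃ π : Measure (S × X × Y), IsTripleCoupling π σ μ ν ∧ c = mgwEps ε π} :=
  ⟨gwSq σ μ + gwSq σ ν, by rintro c ⟨π, hπ, rfl⟩; exact lower_bound' σ μ ν hε hπ⟩

private lemma glue_exists' {δ : ℝ} (hδ : 0 < δ) :
    ∃ π : Measure (S × X × Y), IsTripleCoupling π σ μ ν ∧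
      gwCost (π.map (fun p => (p.1, p.2.1))) + gwCost (π.map (fun p => (p.1, p.2.2)))
        < gwSq σ μ + gwSq σ ν + δ := by
  haveI : Nonempty X := nonempty_of_prob' μ
  haveI : Nonempty Y := nonempty_of_prob' ν
  obtain ⟨c₁, ⟨π₁, h₁, rfl⟩, hlt₁⟩ :=
    Real.lt_sInf_add_pos (coupling_set_nonempty' σ μ) (half_pos hδ)
  obtain ⟨c₂, ⟨π₂, h₂, rfl⟩, hlt₂⟩ :=
    Real.lt_sInf_add_pos (coupling_set_nonempty' σ ν) (half_pos hδ)
  haveI : IsProbabilityMeasure π₁ := prob_of_map_fst' h₁.1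
  haveI : IsProbabilityMeasure π₂ := prob_of_map_fst' h₂.1
  have hfst₁ : π₁.fst = σ := h₁.1
  have hfst₂ : π₂.fst = σ := h₂.1
  have hT₁ : Measurable fun p : S × X × Y => (p.1, p.2.1) := by fun_prop
  have hT₂ : Measurable fun p : S × X × Y => (p.1, p.2.2) := by fun_prop
  set π : Measure (S × X × Y) := σ ⊗ₘ (π₁.condKernel ×ₖ π₂.condKernel) with hπdef
  have hm₁ : π.map (fun p => (p.1, p.2.1)) = π₁ := by
    have e : π.map (fun p : S × X × Y => (p.1, p.2.1)) = σ ⊗ₘ π₁.condKernel := by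
      ext s hs
      rw [Measure.map_apply hT₁ hs, Measure.compProd_apply (hT₁ hs), Measure.compProd_apply hs]
      refine lintegral_congr fun a => ?_
      have h3 : (Prod.mk a ⁻¹' ((fun p : S × X × Y => (p.1, p.2.1)) ⁻¹' s))
          = {p : X × Y | p.1 ∈ Prod.mk a ⁻¹' s} := rfl
      rw [h3, ← Kernel.fst_apply' _ _ (measurable_prodMk_left hs), Kernel.fst_prod]
    rw [e, ← hfst₁]
    exact Measure.disintegrate π₁ π₁.condKernel
  have hm₂ : π.map (fun p => (p.1, p.2.2)) = π₂ := by
    have e : π.map (fun p : S × X × Y => (p.1, p.2.2)) = σ ⊗ₘ π₂.condKernel := by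
      ext s hs
      rw [Measure.map_apply hT₂ hs, Measure.compProd_apply (hT₂ hs), Measure.compProd_apply hs]
      refine lintegral_congr fun a => ?_
      have h3 : (Prod.mk a ⁻¹' ((fun p : S × X × Y => (p.1, p.2.2)) ⁻¹' s))
          = (Prod.snd ⁻¹' (Prod.mk a ⁻¹' s) : Set (X × Y)) := rfl
      rw [h3, ← Kernel.snd_apply' _ _ (measurable_prodMk_left hs), Kernel.snd_prod]
    rw [e, ← hfst₂]
    exact Measure.disintegrate π₂ π₂.condKernel
  refine ⟨π, ⟨?_, ?_, ?_⟩, ?_⟩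
  · exact Measure.fst_compProd σ _
  · rw [show (fun p : S × X × Y => p.2.1)
        = Prod.snd ∘ (fun p : S × X × Y => (p.1, p.2.1)) from rfl,
      ← Measure.map_map measurable_snd hT₁, hm₁]
    exact h₁.2
  · rw [show (fun p : S × X × Y => p.2.2)
        = Prod.snd ∘ (fun p : S × X × Y => (p.1, p.2.2)) from rfl,
      ← Measure.map_map measurable_snd hT₂, hm₂]
    exact h₂.2
  · rw [hm₁, hm₂]
    have e1 : sInf {c | ∃ π : Measure (S × X), IsCoupling π σ μ ∧ c = gwCost π} = gwSq σ μ := rfl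
    have e2 : sInf {c | ∃ π : Measure (S × Y), IsCoupling π σ ν ∧ c = gwCost π} = gwSq σ ν := rfl
    rw [e1] at hlt₁
    rw [e2] at hlt₂
    linarith

end AuxLGW

/-- `ε ↦ V(ε)` is nondecreasing on `(0,∞)` and
`V(ε) → GW(S,X)² + GW(S,Y)²` as `ε → 0⁺`. -/
theorem mgwVal_monotone_tendsto
    {S X Y : Type*}
    [MetricSpace S] [CompactSpace S] [MeasurableSpace S] [BorelSpace S]
    [MetricSpace X] [CompactSpace X] [MeasurableSpace X] [BorelSpace X]
    [MetricSpace Y] [CompactSpace Y] [MeasurableSpace Y] [BorelSpace Y]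
    (σ : Measure S) (μ : Measure X) (ν : Measure Y)
    [IsProbabilityMeasure σ] [IsProbabilityMeasure μ] [IsProbabilityMeasure ν] :
    (∀ ε₁ ε₂ : ℝ, 0 < ε₁ → ε₁ ≤ ε₂ → mgwVal σ μ ν ε₁ ≤ mgwVal σ μ ν ε₂) ∧
    Tendsto (mgwVal σ μ ν) (𝓝[>] 0) (𝓝 (gwSq σ μ + gwSq σ ν)) := by
  constructor
  · intro ε₁ ε₂ hε₁ h12
    unfold mgwVal
    refine le_csInf (triple_set_nonempty' σ μ ν ε₂) ?_
    rintro c ⟨π, hπ, rfl⟩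
    haveI := tripleProb' hπ
    refine (csInf_le (bdd' σ μ ν hε₁.le) ⟨π, hπ, rfl⟩).trans ?_
    rw [mgwEps_eq' ε₁ π, mgwEps_eq' ε₂ π]
    have hA : 0 ≤ ∫ w : (S × X × Y) × (S × X × Y),
        (dist w.1.2.1 w.2.2.1 - dist w.1.2.2 w.2.2.2) ^ 2 ∂(π.prod π) :=
      integral_nonneg fun _ => sq_nonneg _
    nlinarith [mul_nonneg (sub_nonneg.mpr h12) hA]
  · rw [Metric.tendsto_nhdsWithin_nhds]
    intro δ hδ
    obtain ⟨π, hπ, hcost⟩ := glue_exists' σ μ ν (half_pos hδ)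
    haveI := tripleProb' hπ
    have hq1 : Continuous fun w : (S × X × Y) × (S × X × Y) =>
        (dist w.1.2.1 w.2.2.1 - dist w.1.2.2 w.2.2.2) ^ 2 := by fun_prop
    set DB : ℝ := (Metric.diam (Set.univ : Set X) + Metric.diam (Set.univ : Set Y)) ^ 2
      with hDB
    have hDB0 : 0 ≤ DB := sq_nonneg _
    refine ⟨δ / (2 * (DB + 1)), by positivity, ?_⟩
    intro ε hεmem hεd
    have hε0 : 0 < ε := hεmem
    rw [Real.dist_eq, sub_zero, abs_of_pos hε0] at hεd
    have hA0 : 0 ≤ ∫ w : (S × X × Y) × (S × X × Y),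
        (dist w.1.2.1 w.2.2.1 - dist w.1.2.2 w.2.2.2) ^ 2 ∂(π.prod π) :=
      integral_nonneg fun _ => sq_nonneg _
    have hAB : (∫ w : (S × X × Y) × (S × X × Y),
        (dist w.1.2.1 w.2.2.1 - dist w.1.2.2 w.2.2.2) ^ 2 ∂(π.prod π)) ≤ DB := by
      have hb : ∀ w : (S × X × Y) × (S × X × Y),
          (dist w.1.2.1 w.2.2.1 - dist w.1.2.2 w.2.2.2) ^ 2 ≤ DB := by
        intro w
        have hx : dist w.1.2.1 w.2.2.1 ≤ Metric.diam (Set.univ : Set X) :=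
          Metric.dist_le_diam_of_mem isCompact_univ.isBounded (Set.mem_univ _) (Set.mem_univ _)
        have hy : dist w.1.2.2 w.2.2.2 ≤ Metric.diam (Set.univ : Set Y) :=
          Metric.dist_le_diam_of_mem isCompact_univ.isBounded (Set.mem_univ _) (Set.mem_univ _)
        have h1 : (0 : ℝ) ≤ dist w.1.2.1 w.2.2.1 := dist_nonneg
        have h2 : (0 : ℝ) ≤ dist w.1.2.2 w.2.2.2 := dist_nonneg
        rw [hDB]
        exact sq_le_sq' (by linarith) (by linarith)
      calc (∫ w : (S × X × Y) × (S × X × Y),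
            (dist w.1.2.1 w.2.2.1 - dist w.1.2.2 w.2.2.2) ^ 2 ∂(π.prod π))
          ≤ ∫ _ : (S × X × Y) × (S × X × Y), DB ∂(π.prod π) :=
            integral_mono (contIntegrable' _ hq1) (integrable_const _) hb
        _ = DB := by simp
    have hup : mgwVal σ μ ν ε ≤ mgwEps ε π := by
      unfold mgwVal
      exact csInf_le (bdd' σ μ ν hε0.le) ⟨π, hπ, rfl⟩
    have hlow : gwSq σ μ + gwSq σ ν ≤ mgwVal σ μ ν ε := by
      unfold mgwVal
      refine le_csInf (triple_set_nonempty' σ μ ν ε) ?_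
      rintro c ⟨π', hπ', rfl⟩
      exact lower_bound' σ μ ν hε0.le hπ'
    have h2 : ε * (2 * (DB + 1)) < δ := (lt_div_iff₀ (by positivity)).mp hεd
    have key : mgwEps ε π < gwSq σ μ + gwSq σ ν + δ := by
      rw [mgwEps_eq' ε π]
      nlinarith [mul_le_mul_of_nonneg_left hAB hε0.le, mul_nonneg hε0.le hA0]
    rw [Real.dist_eq, abs_lt]
    constructor <;> linarith
end
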